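/- A signed cycle (C_q, σ) satisfies r(C_q,σ) + 2α(C_q) = 2q − 2c(C_q) (i.e., it is lower-optimal) if and only if either q ≡ 0 (mod 4) and σ(C_q) = +1, or q ≡ 2 (mod 4) and σ(C_q) = −1. -/

import Mathlib

open SimpleGraph
open scoped Classical

noncomputable section

/-- The adjacency matrix of a signed graph `(G, σ)`. -/
def sAdj {V : Type*} [Fintype V] (G : SimpleGraph V) (σ : Sym2 V → ℝ) : Matrix V V ℝ :=
  fun i j => if G.Adj i j then σ s(i, j) else 0

/-- The rank of a signed graph. -/
def srank {V : Type*} [Fintype V] (G : SimpleGraph V) (σ : Sym2 V → ℝ) : ℕ :=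
  (sAdj G σ).rank

/-- The independence number of a graph. -/
def indepNum {V : Type*} (G : SimpleGraph V) : ℕ :=
  sSup {n | ∃ s : Finset V, (∀ a ∈ s, ∀ b ∈ s, ¬ G.Adj a b) ∧ s.card = n}

/-- The matching number of a graph. -/
def matchNum {V : Type*} (G : SimpleGraph V) : ℕ :=
  sSup {n | ∃ M : G.Subgraph, M.IsMatching ∧ M.edgeSet.ncard = n}

/-- The cyclomatic number `|E| - |V| + ω` of a graph (as a natural number;
the quantity is always nonnegative). -/
def cyclomatic {V : Type*} [Fintype V] (G : SimpleGraph V) : ℕ :=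
  G.edgeSet.ncard + Nat.card G.ConnectedComponent - Fintype.card V

/-- Deleting a set of vertices from a graph: the induced subgraph on the complement. -/
def vdel {V : Type*} (G : SimpleGraph V) (S : Set V) : SimpleGraph ↥(Sᶜ) :=
  G.induce Sᶜ

/-- Restriction of a sign function to a set of vertices. -/
def σres {V : Type*} (σ : Sym2 V → ℝ) (s : Set V) : Sym2 s → ℝ :=
  fun e => σ (e.map Subtype.val)

/-- A signed graph is lower-optimal if `r + 2α = 2n - 2c`. -/
def lowerOptimal {V : Type*} [Fintype V] (G : SimpleGraph V) (σ : Sym2 V → ℝ) : Prop :=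
  srank G σ + 2 * _root_.indepNum G + 2 * cyclomatic G = 2 * Fintype.card V

namespace SCaux

open scoped Fin.CommRing Fin.NatCast Fin.IntCast

variable {n : ℕ}

/-! ### Basic facts about `Fin (n+3)` and `cycleGraph (n+3)` -/

theorem myAdj {u v : Fin (n+3)} : (cycleGraph (n+3)).Adj u v ↔ v = u + 1 ∨ u = v + 1 := by
  have h : (cycleGraph (n+1+2)).Adj u v ↔ u - v = 1 ∨ v - u = 1 := cycleGraph_adj
  rw [h, sub_eq_iff_eq_add, sub_eq_iff_eq_add]
  constructor
  · rintro (h | h) <;> [right; left] <;> simpa [add_comm] using h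
  · rintro (h | h) <;> [right; left] <;> simpa [add_comm] using h

theorem myTwo_ne_zero : (2 : Fin (n+3)) ≠ 0 := by
  have : ((2:ℕ) : Fin (n+3)) ≠ 0 := by simp [Fin.ext_iff, Fin.val_natCast, Nat.mod_eq_of_lt (show 2 < n+3 by omega)]
  simpa using this

/-- The edge weight function. -/
def cw (σ : Sym2 (Fin (n+3)) → ℝ) (i : Fin (n+3)) : ℝ := σ s(i, i+1)

theorem sub_ne_add (i : Fin (n+3)) : i - 1 ≠ i + 1 := by
  intro h
  apply myTwo_ne_zero (n := n)
  linear_combination -h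

theorem sAdj_succ (σ : Sym2 (Fin (n+3)) → ℝ) (i : Fin (n+3)) :
    sAdj (cycleGraph (n+3)) σ i (i+1) = cw σ i := by
  rw [sAdj, if_pos (myAdj.2 (Or.inl rfl))]; rfl

theorem sAdj_pred (σ : Sym2 (Fin (n+3)) → ℝ) (i : Fin (n+3)) :
    sAdj (cycleGraph (n+3)) σ i (i-1) = cw σ (i-1) := by
  rw [sAdj, if_pos (myAdj.2 (Or.inr (sub_add_cancel i 1).symm))]
  rw [cw, Sym2.eq_swap]
  rw [sub_add_cancel]

theorem sAdj_zero (σ : Sym2 (Fin (n+3)) → ℝ) {i j : Fin (n+3)} (h1 : j ≠ i - 1) (h2 : j ≠ i + 1) :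
    sAdj (cycleGraph (n+3)) σ i j = 0 := by
  rw [sAdj, if_neg]
  rw [myAdj]
  rintro (h | h)
  · exact h2 h
  · exact h1 (by rw [h]; ring)

theorem mulVec_eq (σ : Sym2 (Fin (n+3)) → ℝ) (x : Fin (n+3) → ℝ) (i : Fin (n+3)) :
    (sAdj (cycleGraph (n+3)) σ).mulVec x i = cw σ (i-1) * x (i-1) + cw σ i * x (i+1) := by
  rw [Matrix.mulVec, dotProduct]
  rw [← Finset.sum_subset (Finset.subset_univ ({i-1, i+1} : Finset (Fin (n+3))))
      (fun j _ hj => by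
        simp only [Finset.mem_insert, Finset.mem_singleton, not_or] at hj
        rw [sAdj_zero σ hj.1 hj.2, zero_mul])]
  rw [Finset.sum_pair (sub_ne_add i), sAdj_pred, sAdj_succ]

/-! ### The recurrence for kernel vectors -/

section kernel

variable (w : Fin (n+3) → ℝ)

theorem step (hw : ∀ i, w i * w i = 1)
    (x : Fin (n+3) → ℝ) (hx : ∀ i, w (i-1) * x (i-1) + w i * x (i+1) = 0)
    (i : Fin (n+3)) : x (i + 2) = -(w (i+1) * w i) * x i := by
  have h := hx (i + 1)
  have h1 : i + 1 - 1 = i := by ring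
  have h2 : i + 1 + 1 = i + 2 := by ring
  rw [h1, h2] at h
  have := congrArg (w (i+1) * ·) h
  simp only [mul_add, ← mul_assoc, hw (i+1), mul_zero, one_mul] at this
  linarith [this]

theorem iterate (hw : ∀ i, w i * w i = 1)
    (x : Fin (n+3) → ℝ) (hx : ∀ i, w (i-1) * x (i-1) + w i * x (i+1) = 0)
    (v : Fin (n+3)) : ∀ k : ℕ,
      x (v + ((2*k : ℕ) : Fin (n+3)))
        = (∏ j ∈ Finset.range k, -(w (v + ((2*j+1 : ℕ) : Fin (n+3))) * w (v + ((2*j : ℕ) : Fin (n+3))))) * x v := by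
  intro k
  induction k with
  | zero => simp
  | succ k ih =>
      have hcast : ((2*(k+1) : ℕ) : Fin (n+3)) = ((2*k : ℕ) : Fin (n+3)) + 2 := by push_cast; ring
      have hcast1 : ((2*k+1 : ℕ) : Fin (n+3)) = ((2*k : ℕ) : Fin (n+3)) + 1 := by push_cast; ring
      rw [hcast, ← add_assoc, step w hw x hx, Finset.prod_range_succ, hcast1, ← add_assoc, ih]
      ring

theorem prod_neg (v : Fin (n+3)) : ∀ k : ℕ,
    (∏ j ∈ Finset.range k, -(w (v + ((2*j+1 : ℕ) : Fin (n+3))) * w (v + ((2*j : ℕ) : Fin (n+3)))))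
      = (-1)^k * ∏ m ∈ Finset.range (2*k), w (v + (m : Fin (n+3))) := by
  intro k
  induction k with
  | zero => simp
  | succ k ih =>
      rw [Finset.prod_range_succ, ih, show 2*(k+1) = (2*k+1)+1 from rfl,
        Finset.prod_range_succ, Finset.prod_range_succ]
      ring

theorem prod_shift (v : Fin (n+3)) :
    (∏ m ∈ Finset.range (n+3), w (v + (m : Fin (n+3)))) = ∏ i : Fin (n+3), w i := by
  rw [← Fin.prod_univ_eq_prod_range (fun m : ℕ => w (v + (m : Fin (n+3)))) (n+3)]
  simp only [Fin.cast_val_eq_self]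
  exact Fintype.prod_equiv (Equiv.addLeft v) _ _ (fun i => rfl)

theorem Wsq (hw : ∀ i, w i * w i = 1) :
    (∏ i : Fin (n+3), w i) * (∏ i : Fin (n+3), w i) = 1 := by
  rw [← Finset.prod_mul_distrib]
  simp [hw]

theorem loop_odd (hw : ∀ i, w i * w i = 1) (hodd : (n+3) % 2 = 1)
    (x : Fin (n+3) → ℝ) (hx : ∀ i, w (i-1) * x (i-1) + w i * x (i+1) = 0)
    (v : Fin (n+3)) : x v = 0 := by
  have h := iterate w hw x hx v (n+3)
  rw [prod_neg] at h
  have hz : ((2*(n+3) : ℕ) : Fin (n+3)) = 0 := by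
    rw [Nat.cast_mul, Fin.natCast_self, mul_zero]
  rw [hz, add_zero] at h
  have hp : (∏ m ∈ Finset.range (2*(n+3)), w (v + (m : Fin (n+3)))) = 1 := by
    rw [two_mul, Finset.prod_range_add]
    have : ∀ j ∈ Finset.range (n+3), w (v + ((n+3+j : ℕ) : Fin (n+3))) = w (v + (j : Fin (n+3))) := by
      intro j _
      congr 2
      rw [Nat.cast_add, Fin.natCast_self, zero_add]
    rw [Finset.prod_congr rfl this, prod_shift, Wsq w hw]
  rw [hp, mul_one] at h
  have hneg : ((-1:ℝ))^(n+3) = -1 := by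
    rw [← Nat.div_add_mod (n+3) 2, hodd, pow_add, pow_mul]
    norm_num
  rw [hneg] at h
  linarith

theorem loop_even (hw : ∀ i, w i * w i = 1) (heven : (n+3) % 2 = 0)
    (hE : (-1:ℝ)^((n+3)/2) * (∏ i : Fin (n+3), w i) = -1)
    (x : Fin (n+3) → ℝ) (hx : ∀ i, w (i-1) * x (i-1) + w i * x (i+1) = 0)
    (v : Fin (n+3)) : x v = 0 := by
  have h2 : 2 * ((n+3)/2) = n+3 := Nat.two_mul_div_two_of_even (Nat.even_iff.mpr heven)
  have h := iterate w hw x hx v ((n+3)/2)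
  rw [prod_neg, h2] at h
  have hz : ((n+3 : ℕ) : Fin (n+3)) = 0 := by simp
  rw [hz, add_zero, prod_shift, hE] at h
  linarith

/-! ### The two explicit kernel vectors in the singular case -/

/-- Partial products of the recurrence coefficients, starting at `s`. -/
def P (s : Fin (n+3)) (k : ℕ) : ℝ :=
  ∏ j ∈ Finset.range k, -(w (s + ((2*j+1 : ℕ) : Fin (n+3))) * w (s + ((2*j : ℕ) : Fin (n+3))))

/-- A kernel vector supported on the vertices at even distance from `s`. -/
def us (s : Fin (n+3)) : Fin (n+3) → ℝ :=
  fun t => if (t - s).val % 2 = 0 then P w s ((t - s).val / 2) else 0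

theorem us_self (s : Fin (n+3)) : us w s s = 1 := by
  rw [us, sub_self]
  simp [P]

theorem us_succ (s : Fin (n+3)) : us w s (s+1) = 0 := by
  have h1 : ((1:Fin (n+3)).val) = 1 := rfl
  rw [us, add_sub_cancel_left, if_neg (by omega)]

theorem neg_one_val : ((0:Fin (n+3)) - 1).val = n + 2 := by
  have h : ((n+2 : ℕ) : Fin (n+3)) = 0 - 1 := by
    rw [eq_sub_iff_add_eq, ← Nat.cast_one, ← Nat.cast_add]
    exact Fin.natCast_self (n+3)
  rw [← h, Fin.val_cast_of_lt (by omega)]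

theorem us_one_zero (heven : (n+3) % 2 = 0) : us w 1 0 = 0 := by
  rw [us, neg_one_val, if_neg (by omega)]

theorem parity_add_one (heven : (n+3) % 2 = 0) (d : Fin (n+3)) :
    (d + 1).val % 2 = (d.val + 1) % 2 := by
  rw [Fin.add_def]
  simp only
  have h1 : ((1 : Fin (n+3)) : ℕ) = 1 := rfl
  rw [h1, Nat.mod_mod_of_dvd _ (Nat.dvd_of_mod_eq_zero heven)]

theorem parity_sub_one (heven : (n+3) % 2 = 0) (d : Fin (n+3)) :
    (d - 1).val % 2 = (d.val + 1) % 2 := by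
  have h := parity_add_one (n := n) heven (d - 1)
  rw [sub_add_cancel] at h
  omega

theorem us_ker (hw : ∀ i, w i * w i = 1) (heven : (n+3) % 2 = 0)
    (hPm : ∀ s, P w s ((n+3)/2) = 1) (s : Fin (n+3)) (i : Fin (n+3)) :
    w (i-1) * us w s (i-1) + w i * us w s (i+1) = 0 := by
  set d := i - s with hd
  have hi : i = s + d := by rw [hd]; ring
  have hm1 : i - 1 - s = d - 1 := by rw [hd]; ring
  have hp1 : i + 1 - s = d + 1 := by rw [hd]; ring
  rcases Nat.even_or_odd d.val with h0 | h0
  · rw [Nat.even_iff] at h0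
    have h1 : (d+1).val % 2 = 1 := by rw [parity_add_one heven]; omega
    have h2 : (d-1).val % 2 = 1 := by rw [parity_sub_one heven]; omega
    rw [us, us, hm1, hp1, if_neg (by omega), if_neg (by omega)]
    ring
  · rw [Nat.odd_iff] at h0
    set k := d.val / 2 with hk
    have hdk : d.val = 2*k+1 := by omega
    have hklt : 2*k+1 < n+3 := hdk ▸ d.isLt
    have hdcast : d = ((2*k+1 : ℕ) : Fin (n+3)) := by
      conv_lhs => rw [← Fin.cast_val_eq_self d]
      rw [hdk]
    have hdm1 : d - 1 = ((2*k : ℕ) : Fin (n+3)) := by rw [hdcast]; push_cast; ring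
    have hval2k : (((2*k : ℕ)) : Fin (n+3)).val = 2*k := Fin.val_cast_of_lt (by omega)
    have hus1 : us w s (i-1) = P w s k := by
      rw [us, hm1, hdm1, hval2k, if_pos (by omega)]
      congr 1
      omega
    have hi1 : i - 1 = s + ((2*k : ℕ) : Fin (n+3)) := by
      rw [hi, hdcast]; push_cast; ring
    have hieq : i = s + ((2*k+1 : ℕ) : Fin (n+3)) := by rw [hi, hdcast]
    have hPsucc : P w s (k+1) = P w s k *
        -(w (s + ((2*k+1 : ℕ) : Fin (n+3))) * w (s + ((2*k : ℕ) : Fin (n+3)))) := by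
      rw [P, Finset.prod_range_succ]; rfl
    have hle : 2*k+2 ≤ n+3 := by omega
    rcases lt_or_eq_of_le hle with hlt | heq
    · have hdp1 : d + 1 = ((2*k+2 : ℕ) : Fin (n+3)) := by rw [hdcast]; push_cast; ring
      have hv : (((2*k+2 : ℕ)) : Fin (n+3)).val = 2*k+2 := Fin.val_cast_of_lt hlt
      have hus2 : us w s (i+1) = P w s (k+1) := by
        rw [us, hp1, hdp1, hv, if_pos (by omega)]
        congr 1
        omega
      rw [hus1, hus2, hi1, hieq, hPsucc]
      have hsq := hw (s + ((2*k+1 : ℕ) : Fin (n+3)))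
      linear_combination (-(w (s + ((2*k : ℕ) : Fin (n+3))) * P w s k)) * hsq
    · have hdp1 : d + 1 = 0 := by
        rw [hdcast]
        have : ((2*k+2 : ℕ) : Fin (n+3)) = 0 := by rw [heq]; exact Fin.natCast_self (n+3)
        push_cast at this ⊢
        linear_combination this
      have hus2 : us w s (i+1) = 1 := by
        rw [us, hp1, hdp1]
        simp [P]
      have hkm : k + 1 = (n+3)/2 := by omega
      have h1 : P w s k *
          -(w (s + ((2*k+1 : ℕ) : Fin (n+3))) * w (s + ((2*k : ℕ) : Fin (n+3)))) = 1 := by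
        rw [← hPsucc, hkm, hPm s]
      rw [hus1, hus2, hi1, hieq]
      have hsq := hw (s + ((2*k+1 : ℕ) : Fin (n+3)))
      linear_combination (-(w (s + ((2*k+1 : ℕ) : Fin (n+3))))) * h1 +
        (-(w (s + ((2*k : ℕ) : Fin (n+3))) * P w s k)) * hsq

theorem zero_of_01 (hw : ∀ i, w i * w i = 1)
    (x : Fin (n+3) → ℝ) (hx : ∀ i, w (i-1) * x (i-1) + w i * x (i+1) = 0)
    (h0 : x 0 = 0) (h1 : x 1 = 0) : x = 0 := by
  funext t
  show x t = 0
  rcases Nat.even_or_odd t.val with h | h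
  · rw [Nat.even_iff] at h
    have hit := iterate w hw x hx 0 (t.val/2)
    have ht : (0 : Fin (n+3)) + ((2*(t.val/2) : ℕ) : Fin (n+3)) = t := by
      rw [zero_add, show 2*(t.val/2) = t.val by omega, Fin.cast_val_eq_self]
    rw [ht, h0, mul_zero] at hit
    exact hit
  · rw [Nat.odd_iff] at h
    have hit := iterate w hw x hx 1 ((t.val-1)/2)
    have ht : (1 : Fin (n+3)) + ((2*((t.val-1)/2) : ℕ) : Fin (n+3)) = t := by
      rw [show 2*((t.val-1)/2) = t.val - 1 by omega]
      have htv : t = ((t.val - 1 + 1 : ℕ) : Fin (n+3)) := by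
        rw [show t.val - 1 + 1 = t.val by omega, Fin.cast_val_eq_self]
      conv_rhs => rw [htv]
      rw [Nat.cast_add, Nat.cast_one]
      ring
    rw [ht, h1, mul_zero] at hit
    exact hit

/-! ### Rank computations -/

theorem rank_add_nullity {q : ℕ} (A : Matrix (Fin q) (Fin q) ℝ) :
    A.rank + Module.finrank ℝ (LinearMap.ker A.mulVecLin) = q := by
  rw [Matrix.rank]
  rw [LinearMap.finrank_range_add_finrank_ker A.mulVecLin]
  simp [Module.finrank_fin_fun]

theorem rank_of_ker_bot {q : ℕ} (A : Matrix (Fin q) (Fin q) ℝ)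
    (h : ∀ x, A.mulVec x = 0 → x = 0) : A.rank = q := by
  have hk : LinearMap.ker A.mulVecLin = ⊥ := by
    rw [LinearMap.ker_eq_bot']
    intro x hx
    exact h x (by simpa [Matrix.mulVecLin_apply] using hx)
  have := rank_add_nullity A
  rw [hk] at this
  simpa using this

theorem nullity_eq_two (A : Matrix (Fin (n+3)) (Fin (n+3)) ℝ)
    (hker : ∀ x, A.mulVec x = 0 ↔ ∀ i, w (i-1) * x (i-1) + w i * x (i+1) = 0)
    (hw : ∀ i, w i * w i = 1) (heven : (n+3) % 2 = 0)
    (hPm : ∀ s, P w s ((n+3)/2) = 1) :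
    Module.finrank ℝ (LinearMap.ker A.mulVecLin) = 2 := by
  have hmem : ∀ x, x ∈ LinearMap.ker A.mulVecLin ↔
      ∀ i, w (i-1) * x (i-1) + w i * x (i+1) = 0 := by
    intro x
    rw [LinearMap.mem_ker, Matrix.mulVecLin_apply, hker]
  apply le_antisymm
  · set K := LinearMap.ker A.mulVecLin
    let φ : K →ₗ[ℝ] ℝ × ℝ :=
      ((LinearMap.proj 0).comp K.subtype).prod ((LinearMap.proj 1).comp K.subtype)
    have hinj : Function.Injective φ := by
      rw [← LinearMap.ker_eq_bot, LinearMap.ker_eq_bot']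
      rintro ⟨x, hx⟩ hφ
      have h0 : x 0 = 0 := congrArg Prod.fst hφ
      have h1 : x 1 = 0 := congrArg Prod.snd hφ
      have := zero_of_01 w hw x ((hmem x).mp hx) h0 h1
      exact Subtype.ext this
    have := LinearMap.finrank_le_finrank_of_injective hinj
    simpa using this
  · have hu0 : us w 0 ∈ LinearMap.ker A.mulVecLin := (hmem _).mpr (fun i =>
      us_ker w hw heven hPm 0 i)
    have hu1 : us w 1 ∈ LinearMap.ker A.mulVecLin := (hmem _).mpr (fun i =>
      us_ker w hw heven hPm 1 i)
    have hli : LinearIndependent ℝ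
        ![(⟨us w 0, hu0⟩ : LinearMap.ker A.mulVecLin), ⟨us w 1, hu1⟩] := by
      apply LinearIndependent.of_comp (LinearMap.ker A.mulVecLin).subtype
      have heq : ((LinearMap.ker A.mulVecLin).subtype ∘
          ![(⟨us w 0, hu0⟩ : LinearMap.ker A.mulVecLin), ⟨us w 1, hu1⟩]) = ![us w 0, us w 1] := by
        funext j
        fin_cases j <;> rfl
      rw [heq, LinearIndependent.pair_iff]
      intro a b hab
      have e0 := congrFun hab 0
      have e1 := congrFun hab 1
      simp only [Pi.add_apply, Pi.smul_apply, smul_eq_mul, Pi.zero_apply] at e0 e1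
      rw [us_one_zero w heven] at e0
      rw [show us w 0 0 = 1 from us_self w 0] at e0
      rw [show us w 1 1 = 1 from us_self w 1] at e1
      rw [show us w 0 1 = 0 from by simpa using us_succ w 0] at e1
      constructor <;> linarith
    have := hli.fintype_card_le_finrank
    simpa using this

end kernel

/-! ### Independence number -/

theorem indep_le (s : Finset (Fin (n+3))) (hs : ∀ a ∈ s, ∀ b ∈ s, ¬ (cycleGraph (n+3)).Adj a b) :
    s.card ≤ (n+3)/2 := by
  have hdisj : Disjoint s (s.image (· + 1)) := by
    rw [Finset.disjoint_right]
    intro v hv hvs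
    obtain ⟨u, hu, huv⟩ := Finset.mem_image.mp hv
    exact hs u hu v hvs (myAdj.mpr (Or.inl huv.symm))
  have hcard : (s.image (· + 1)).card = s.card :=
    Finset.card_image_of_injective s (add_left_injective 1)
  have := Finset.card_union_of_disjoint hdisj ▸ Finset.card_le_univ (s ∪ s.image (· + 1))
  rw [hcard, Fintype.card_fin] at this
  omega

theorem indep_achieve : ∃ s : Finset (Fin (n+3)),
    (∀ a ∈ s, ∀ b ∈ s, ¬ (cycleGraph (n+3)).Adj a b) ∧ s.card = (n+3)/2 := by
  refine ⟨(Finset.range ((n+3)/2)).image (fun k => ((2*k : ℕ) : Fin (n+3))), ?_, ?_⟩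
  · intro a ha b hb hab
    obtain ⟨ka, hka, rfl⟩ := Finset.mem_image.mp ha
    obtain ⟨kb, hkb, rfl⟩ := Finset.mem_image.mp hb
    rw [Finset.mem_range] at hka hkb
    have hva : (((2*ka : ℕ)) : Fin (n+3)).val = 2*ka := Fin.val_cast_of_lt (by omega)
    have hvb : (((2*kb : ℕ)) : Fin (n+3)).val = 2*kb := Fin.val_cast_of_lt (by omega)
    rw [myAdj] at hab
    rcases hab with h | h
    · have hv := congrArg Fin.val h
      rw [Fin.add_def] at hv
      simp only [hva, hvb] at hv
      have h1 : ((1:Fin (n+3)):ℕ) = 1 := rfl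
      rw [h1, Nat.mod_eq_of_lt (by omega)] at hv
      omega
    · have hv := congrArg Fin.val h
      rw [Fin.add_def] at hv
      simp only [hva, hvb] at hv
      have h1 : ((1:Fin (n+3)):ℕ) = 1 := rfl
      rw [h1, Nat.mod_eq_of_lt (by omega)] at hv
      omega
  · rw [Finset.card_image_of_injOn (fun a ha b hb hab => by
      rw [Finset.coe_range, Set.mem_Iio] at ha hb
      have hva : (((2*a : ℕ)) : Fin (n+3)).val = 2*a := Fin.val_cast_of_lt (by omega)
      have hvb : (((2*b : ℕ)) : Fin (n+3)).val = 2*b := Fin.val_cast_of_lt (by omega)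
      have := congrArg Fin.val hab
      rw [hva, hvb] at this
      omega), Finset.card_range]

theorem indepNum_cycle : _root_.indepNum (cycleGraph (n+3)) = (n+3)/2 := by
  apply le_antisymm
  · apply csSup_le
    · obtain ⟨s, hs⟩ := indep_achieve (n := n)
      exact ⟨(n+3)/2, s, hs⟩
    · rintro m ⟨s, hs, rfl⟩
      exact indep_le s hs
  · apply le_csSup
    · refine ⟨n+3, ?_⟩
      rintro m ⟨s, _, rfl⟩
      exact (Finset.card_le_univ s).trans (by simp)
    · obtain ⟨s, hs1, hs2⟩ := indep_achieve (n := n)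
      exact ⟨s, hs1, hs2⟩

/-! ### Cyclomatic number and edge products -/

theorem edge_inj : Function.Injective (fun i : Fin (n+3) => s(i, i+1)) := by
  intro i j h
  simp only [Sym2.eq, Sym2.rel_iff', Prod.mk.injEq, Prod.swap_prod_mk] at h
  rcases h with ⟨h1, _⟩ | ⟨h1, h2⟩
  · exact h1
  · exfalso
    apply myTwo_ne_zero (n := n)
    linear_combination h2 - h1

theorem edgeSet_eq : (cycleGraph (n+3)).edgeSet = Set.range (fun i : Fin (n+3) => s(i, i+1)) := by
  ext e
  refine e.ind (fun u v => ?_)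
  simp only [mem_edgeSet, Set.mem_range]
  rw [myAdj]
  constructor
  · rintro (rfl | rfl)
    · exact ⟨u, rfl⟩
    · exact ⟨v, Sym2.eq_swap⟩
  · rintro ⟨i, hi⟩
    rw [Sym2.eq, Sym2.rel_iff', Prod.mk.injEq, Prod.swap_prod_mk] at hi
    rcases hi with ⟨rfl, rfl⟩ | ⟨rfl, rfl⟩
    · exact Or.inl rfl
    · exact Or.inr rfl

theorem edgeFinset_eq : (cycleGraph (n+3)).edgeSet.toFinset
    = Finset.univ.image (fun i : Fin (n+3) => s(i, i+1)) := by
  rw [Set.toFinset_congr edgeSet_eq, Set.toFinset_range]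

theorem edge_ncard : (cycleGraph (n+3)).edgeSet.ncard = n+3 := by
  rw [Set.ncard_eq_toFinset_card', edgeFinset_eq,
    Finset.card_image_of_injective _ edge_inj]
  simp

theorem ncc : Nat.card (cycleGraph (n+3)).ConnectedComponent = 1 := by
  rw [Nat.card_eq_one_iff_unique]
  constructor
  · constructor
    intro c d
    refine c.ind (fun u => d.ind (fun v => ?_))
    exact ConnectedComponent.sound ((cycleGraph_connected (n := n+2)).preconnected u v)
  · exact ⟨(cycleGraph (n+3)).connectedComponentMk 0⟩

theorem cyclomatic_cycle : cyclomatic (cycleGraph (n+3)) = 1 := by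
  rw [cyclomatic, edge_ncard, ncc]
  simp

theorem prod_edges (σ : Sym2 (Fin (n+3)) → ℝ) :
    ∏ e ∈ (cycleGraph (n+3)).edgeSet.toFinset, σ e = ∏ i : Fin (n+3), cw σ i := by
  rw [edgeFinset_eq, Finset.prod_image (fun a _ b _ h => edge_inj h)]
  rfl

end SCaux

open SCaux in
theorem signedCycle_lowerOptimal_iff {q : ℕ} (hq : 3 ≤ q) (σ : Sym2 (Fin q) → ℝ)
    (hσ : ∀ e ∈ (cycleGraph q).edgeSet, σ e = 1 ∨ σ e = -1) :
    lowerOptimal (cycleGraph q) σ ↔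
      (q % 4 = 0 ∧ ∏ e ∈ (cycleGraph q).edgeSet.toFinset, σ e = 1) ∨
      (q % 4 = 2 ∧ ∏ e ∈ (cycleGraph q).edgeSet.toFinset, σ e = -1) := by
  obtain ⟨n, rfl⟩ : ∃ n, q = n + 3 := ⟨q - 3, by omega⟩
  clear hq
  set W : ℝ := ∏ i : Fin (n+3), cw σ i with hW
  have hprodW : ∏ e ∈ (cycleGraph (n+3)).edgeSet.toFinset, σ e = W := prod_edges σ
  have hw1 : ∀ i, cw σ i = 1 ∨ cw σ i = -1 := fun i =>
    hσ _ ((SimpleGraph.mem_edgeSet _).mpr (myAdj.mpr (Or.inl rfl)))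
  have hwsq : ∀ i, cw σ i * cw σ i = 1 := fun i => by
    rcases hw1 i with h | h <;> rw [h] <;> norm_num
  have hWpm : W = 1 ∨ W = -1 := mul_self_eq_one_iff.mp (Wsq (cw σ) hwsq)
  have hker : ∀ x : Fin (n+3) → ℝ, (sAdj (cycleGraph (n+3)) σ).mulVec x = 0 ↔
      ∀ i, cw σ (i-1) * x (i-1) + cw σ i * x (i+1) = 0 := by
    intro x
    constructor
    · intro h i
      rw [← mulVec_eq σ x i, h]
      rfl
    · intro h
      funext i
      rw [mulVec_eq σ x i, h i]
      rfl
  have hlo : lowerOptimal (cycleGraph (n+3)) σ ↔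
      srank (cycleGraph (n+3)) σ + 2 * ((n+3)/2) + 2 = 2 * (n+3) := by
    rw [lowerOptimal, indepNum_cycle, cyclomatic_cycle, Fintype.card_fin]
  rcases Nat.even_or_odd (n+3) with heven | hodd
  · -- even case
    rw [Nat.even_iff] at heven
    have hEpm : (-1:ℝ)^((n+3)/2) * W = 1 ∨ (-1:ℝ)^((n+3)/2) * W = -1 := by
      rcases Nat.even_or_odd ((n+3)/2) with he | ho
      · rw [he.neg_one_pow, one_mul]; exact hWpm
      · rw [ho.neg_one_pow]; rcases hWpm with h | h <;> rw [h] <;> norm_num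
    rcases hEpm with hE | hE
    · -- singular case: rank = q - 2, lower-optimal, RHS true
      have hPm : ∀ s, P (cw σ) s ((n+3)/2) = 1 := by
        intro s
        rw [P, prod_neg, Nat.two_mul_div_two_of_even (Nat.even_iff.mpr heven), prod_shift]
        exact hE
      have hnull := nullity_eq_two (cw σ) (sAdj (cycleGraph (n+3)) σ) hker hwsq heven hPm
      have hrank := rank_add_nullity (sAdj (cycleGraph (n+3)) σ)
      rw [hnull] at hrank
      have hsr : srank (cycleGraph (n+3)) σ = n+1 := by
        rw [srank]; omega
      constructor
      · intro _
        rcases Nat.even_or_odd ((n+3)/2) with he | ho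
        · left
          have h4 : (n+3) % 4 = 0 := by
            rw [Nat.even_iff] at he; omega
          have : W = 1 := by
            rw [he.neg_one_pow, one_mul] at hE; exact hE
          exact ⟨h4, by rw [hprodW, this]⟩
        · right
          have h4 : (n+3) % 4 = 2 := by
            rw [Nat.odd_iff] at ho; omega
          have : W = -1 := by
            rw [ho.neg_one_pow] at hE; linarith
          exact ⟨h4, by rw [hprodW, this]⟩
      · intro _
        rw [hlo, hsr]
        omega
    · -- nonsingular even case: rank = q, not lower-optimal, RHS false
      have hsr : srank (cycleGraph (n+3)) σ = n+3 := by
        rw [srank]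
        apply rank_of_ker_bot
        intro x hx
        funext v
        exact loop_even (cw σ) hwsq heven hE x ((hker x).mp hx) v
      constructor
      · intro hL
        rw [hlo, hsr] at hL
        omega
      · rintro (⟨h4, hP⟩ | ⟨h4, hP⟩)
        · rw [hprodW] at hP
          have he : Even ((n+3)/2) := by rw [Nat.even_iff]; omega
          rw [he.neg_one_pow, one_mul, hP] at hE
          norm_num at hE
        · rw [hprodW] at hP
          have ho : Odd ((n+3)/2) := by rw [Nat.odd_iff]; omega
          rw [ho.neg_one_pow, hP] at hE
          norm_num at hE
  · -- odd case
    rw [Nat.odd_iff] at hodd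
    have hsr : srank (cycleGraph (n+3)) σ = n+3 := by
      rw [srank]
      apply rank_of_ker_bot
      intro x hx
      funext v
      exact loop_odd (cw σ) hwsq hodd x ((hker x).mp hx) v
    constructor
    · intro hL
      rw [hlo, hsr] at hL
      omega
    · rintro (⟨h4, _⟩ | ⟨h4, _⟩) <;> omega
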